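/- Let D_τ, τ ∈ Ω, be a uniformly bounded continuous family of positive definite Hermitian n×n matrices on a probability space (Ω, ν) with ∫_Ω ‖D_τ^{−p}‖₁ dν(τ) < ∞ for every p > 0, where ‖·‖₁ is the trace norm. Then lim_{p→0⁺} (1/p) · log( ∫_Ω (‖D_τ^{−p}‖₁ / n) dν(τ) ) = −(1/n) ∫_Ω log det(D_τ) dν(τ). -/

import Mathlib

open MeasureTheory Filter

private lemma aux_slope (x : ℝ) :
    Tendsto (fun p : ℝ => (Real.exp (p * x) - 1) / p) (nhdsWithin 0 (Set.Ioi 0)) (nhds x) := by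
  have h : HasDerivAt (fun p : ℝ => Real.exp (p * x)) x 0 := by
    simpa using (hasDerivAt_mul_const (x := (0:ℝ)) x).exp
  have h2 := hasDerivAt_iff_tendsto_slope.mp h
  have h3 : Tendsto (slope (fun p : ℝ => Real.exp (p * x)) 0)
      (nhdsWithin 0 (Set.Ioi 0)) (nhds x) :=
    h2.mono_left (nhdsWithin_mono _ (fun y hy => ne_of_gt hy))
  exact h3.congr (fun p => by simp [slope_def_field])

private lemma aux_term_bound {l p : ℝ} (hl : 0 < l) (hp : 0 < p) (hp1 : p ≤ 1) :
    |(l ^ (-p) - 1) / p| ≤ l + l ^ (-(2:ℝ)) := by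
  have hx : l ^ (-p) = Real.exp (p * (-Real.log l)) := by
    rw [Real.rpow_def_of_pos hl]; ring_nf
  set x : ℝ := -Real.log l with hxdef
  have hl2 : (0:ℝ) ≤ l ^ (-(2:ℝ)) := Real.rpow_nonneg hl.le _
  have hl22 : l ^ (-(2:ℝ)) = l⁻¹ * l⁻¹ := by
    rw [show (-(2:ℝ)) = (-1) + (-1) by norm_num, Real.rpow_add hl, Real.rpow_neg_one]
  rcases le_or_gt x 0 with hxle | hxgt
  · have hexp_le : Real.exp (p * x) ≤ 1 := by
      rw [Real.exp_le_one_iff]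
      exact mul_nonpos_of_nonneg_of_nonpos hp.le hxle
    have h1 : 1 - Real.exp (p * x) ≤ p * (-x) := by
      have := Real.add_one_le_exp (p * x); nlinarith
    have habs : |(l ^ (-p) - 1) / p| = (1 - Real.exp (p * x)) / p := by
      rw [hx, abs_div, abs_of_pos hp, abs_of_nonpos (by linarith)]; ring
    have hlog : -x ≤ l := by
      have := Real.log_le_sub_one_of_pos hl
      simp only [hxdef, neg_neg]; linarith
    rw [habs, div_le_iff₀ hp]
    nlinarith
  · have hpx : 0 < p * x := mul_pos hp hxgt
    have hone_le : 1 ≤ Real.exp (p * x) := Real.one_le_exp hpx.le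
    have hinv : Real.exp (-(p*x)) * Real.exp (p*x) = 1 := by
      rw [← Real.exp_add]; simp
    have key : Real.exp (p * x) - 1 ≤ p * x * Real.exp (p * x) := by
      have h := Real.add_one_le_exp (-(p * x))
      nlinarith [mul_le_mul_of_nonneg_right h (Real.exp_pos (p*x)).le]
    have hmono : Real.exp (p * x) ≤ Real.exp x :=
      Real.exp_le_exp.mpr (by nlinarith)
    have hexpx : Real.exp x = l⁻¹ := by
      rw [hxdef, Real.exp_neg, Real.exp_log hl]
    have hxle : x ≤ l⁻¹ := by
      have := Real.log_le_sub_one_of_pos (inv_pos.mpr hl)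
      rw [Real.log_inv] at this
      simp only [hxdef]; linarith
    have habs : |(l ^ (-p) - 1) / p| = (Real.exp (p * x) - 1) / p := by
      rw [hx, abs_div, abs_of_pos hp, abs_of_nonneg (by linarith)]
    rw [habs, div_le_iff₀ hp]
    have h4 : Real.exp (p*x) - 1 ≤ p * (x * l⁻¹) := by
      calc Real.exp (p*x) - 1 ≤ p * x * Real.exp (p*x) := key
        _ ≤ p * x * Real.exp x := by nlinarith [Real.exp_pos (p*x)]
        _ = p * (x * l⁻¹) := by rw [hexpx]; ring
    have h5 : x * l⁻¹ ≤ l⁻¹ * l⁻¹ := by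
      have := inv_pos.mpr hl
      nlinarith
    nlinarith [inv_pos.mpr hl]

private noncomputable def htil (x : ℝ) : ℝ := if x = 1 then 1 else Real.log x / (x - 1)

private lemma htil_tendsto : Tendsto htil (nhds 1) (nhds 1) := by
  have key : Tendsto htil (nhdsWithin 1 {(1:ℝ)}ᶜ ⊔ pure 1) (nhds 1) := by
    rw [tendsto_sup]
    constructor
    · have h : HasDerivAt Real.log 1 1 := by simpa using Real.hasDerivAt_log one_ne_zero
      have h2 := hasDerivAt_iff_tendsto_slope.mp h
      refine h2.congr' ?_
      filter_upwards [self_mem_nhdsWithin] with x hx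
      simp only [Set.mem_compl_iff, Set.mem_singleton_iff] at hx
      simp [htil, hx, slope_def_field]
    · have : htil 1 = 1 := by simp [htil]
      simpa [this] using tendsto_pure_nhds htil 1
  exact key.mono_left (le_of_eq (nhdsNE_sup_pure (1:ℝ)).symm)

/-- Log-determinant limit: for a family `D_τ` of positive definite Hermitian matrices
over a probability space with `∫ ‖D_τ^{-p}‖₁ dν < ∞` for all `p > 0`,
`lim_{p→0⁺} (1/p) log(∫ (‖D_τ^{-p}‖₁/n) dν) = -(1/n) ∫ log det(D_τ) dν`,
where `‖D_τ^{-p}‖₁ = Σᵢ λᵢ(D_τ)^{-p}` and `det D_τ = ∏ᵢ λᵢ(D_τ)`. -/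
theorem log_det_limit {Ω : Type*} [MeasurableSpace Ω] (ν : Measure Ω)
    [IsProbabilityMeasure ν] {n : ℕ} (hn : 0 < n)
    (D : Ω → Matrix (Fin n) (Fin n) ℂ) (hD : ∀ τ, (D τ).IsHermitian)
    (hpos : ∀ τ i, 0 < (hD τ).eigenvalues i)
    (hbdd : ∃ κ : ℝ, ∀ τ i, (hD τ).eigenvalues i ≤ κ)
    (hint : ∀ p : ℝ, 0 < p →
      Integrable (fun τ => ∑ i, (hD τ).eigenvalues i ^ (-p)) ν)
    (hintlog : Integrable (fun τ => Real.log (∏ i, (hD τ).eigenvalues i)) ν) :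
    Tendsto (fun p : ℝ =>
        (1 / p) * Real.log (∫ τ, (∑ i, (hD τ).eigenvalues i ^ (-p)) / n ∂ν))
      (nhdsWithin 0 (Set.Ioi 0))
      (nhds (-(1 / (n : ℝ)) * ∫ τ, Real.log (∏ i, (hD τ).eigenvalues i) ∂ν)) := by
  have hn' : (0:ℝ) < n := Nat.cast_pos.mpr hn
  obtain ⟨κ, hκ⟩ := hbdd
  set L : ℝ := ∫ τ, Real.log (∏ i, (hD τ).eigenvalues i) ∂ν with hL
  set f : Ω → ℝ := fun τ => -(1/(n:ℝ)) * Real.log (∏ i, (hD τ).eigenvalues i) with hf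
  set G : ℝ → Ω → ℝ := fun p τ => ((∑ i, (hD τ).eigenvalues i ^ (-p)) / n - 1) / p with hG
  set F : ℝ → ℝ := fun p => ∫ τ, (∑ i, (hD τ).eigenvalues i ^ (-p)) / n ∂ν with hF
  have hrw : ∀ p : ℝ, p ≠ 0 → ∀ τ,
      G p τ = (∑ i, ((hD τ).eigenvalues i ^ (-p) - 1) / p) / n := by
    intro p hp τ
    simp only [hG]
    rw [← Finset.sum_div, Finset.sum_sub_distrib, Finset.sum_const, Finset.card_univ,
      Fintype.card_fin, nsmul_eq_mul, mul_one, div_sub_one (ne_of_gt hn'), div_div, div_div,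
      mul_comm (n:ℝ) p]
  have hfval : ∀ τ, (∑ i, -Real.log ((hD τ).eigenvalues i)) / (n:ℝ) = f τ := by
    intro τ
    simp only [hf]
    rw [Real.log_prod (fun i _ => (hpos τ i).ne'), Finset.sum_neg_distrib]
    ring
  -- dominated convergence
  have hDCT : Tendsto (fun p => ∫ τ, G p τ ∂ν) (nhdsWithin 0 (Set.Ioi 0))
      (nhds (∫ τ, f τ ∂ν)) := by
    apply tendsto_integral_filter_of_dominated_convergence
      (fun τ => κ + (∑ i, (hD τ).eigenvalues i ^ (-(2:ℝ))) / n)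
    · filter_upwards [self_mem_nhdsWithin] with p hp
      exact ((((hint p hp).div_const (n:ℝ)).sub (integrable_const 1)).div_const p).aestronglyMeasurable
    · filter_upwards [Ioc_mem_nhdsGT_of_mem
        (by constructor <;> norm_num : (0:ℝ) ∈ Set.Ico (0:ℝ) 1)] with p hp
      refine ae_of_all _ fun τ => ?_
      rw [hrw p (ne_of_gt hp.1) τ, Real.norm_eq_abs, abs_div, abs_of_pos hn']
      have h1 : |∑ i, ((hD τ).eigenvalues i ^ (-p) - 1) / p|
          ≤ ∑ i, (κ + (hD τ).eigenvalues i ^ (-(2:ℝ))) := by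
        refine (Finset.abs_sum_le_sum_abs _ _).trans (Finset.sum_le_sum fun i _ => ?_)
        have h2 := aux_term_bound (hpos τ i) hp.1 hp.2
        have h3 : (hD τ).eigenvalues i ≤ κ := hκ τ i
        linarith
      have h2 : (∑ i, (κ + (hD τ).eigenvalues i ^ (-(2:ℝ))))
          = (n:ℝ) * κ + ∑ i, (hD τ).eigenvalues i ^ (-(2:ℝ)) := by
        rw [Finset.sum_add_distrib, Finset.sum_const, Finset.card_univ,
          Fintype.card_fin, nsmul_eq_mul]
      calc |∑ i, ((hD τ).eigenvalues i ^ (-p) - 1) / p| / (n:ℝ)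
          ≤ (∑ i, (κ + (hD τ).eigenvalues i ^ (-(2:ℝ)))) / (n:ℝ) := by gcongr
        _ = κ + (∑ i, (hD τ).eigenvalues i ^ (-(2:ℝ))) / (n:ℝ) := by
            rw [h2]; field_simp
    · exact (integrable_const κ).add ((hint 2 two_pos).div_const _)
    · refine ae_of_all _ fun τ => ?_
      have hterm : ∀ i : Fin n, Tendsto (fun p : ℝ => ((hD τ).eigenvalues i ^ (-p) - 1) / p)
          (nhdsWithin 0 (Set.Ioi 0)) (nhds (-Real.log ((hD τ).eigenvalues i))) := by
        intro i
        refine (aux_slope (-Real.log ((hD τ).eigenvalues i))).congr (fun p => ?_)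
        congr 1
        rw [Real.rpow_def_of_pos (hpos τ i)]
        congr 1
        ring
      have hsum := tendsto_finset_sum Finset.univ (fun i (_ : i ∈ Finset.univ) => hterm i)
      have hdiv := hsum.div_const (n:ℝ)
      rw [hfval τ] at hdiv
      refine hdiv.congr' ?_
      filter_upwards [self_mem_nhdsWithin] with p hp
      exact (hrw p (ne_of_gt hp) τ).symm
  have hfint : ∫ τ, f τ ∂ν = -(1/(n:ℝ)) * L := by
    simp only [hf, hL]
    rw [integral_const_mul]
  rw [hfint] at hDCT
  have hΦF : ∀ p : ℝ, 0 < p → (∫ τ, G p τ ∂ν) = (F p - 1) / p := by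
    intro p hp
    simp only [hG, hF]
    rw [integral_div, integral_sub ((hint p hp).div_const _) (integrable_const 1),
      integral_const]
    simp
  have hslopeF : Tendsto (fun p => (F p - 1) / p) (nhdsWithin 0 (Set.Ioi 0))
      (nhds (-(1/(n:ℝ)) * L)) := by
    refine hDCT.congr' ?_
    filter_upwards [self_mem_nhdsWithin] with p hp
    exact hΦF p hp
  have hF1 : Tendsto F (nhdsWithin 0 (Set.Ioi 0)) (nhds 1) := by
    have hid : Tendsto (fun p : ℝ => p) (nhdsWithin 0 (Set.Ioi 0)) (nhds 0) :=
      tendsto_id.mono_left nhdsWithin_le_nhds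
    have h2 : Tendsto (fun p => 1 + p * ((F p - 1) / p)) (nhdsWithin 0 (Set.Ioi 0))
        (nhds (1 + 0 * (-(1/(n:ℝ)) * L))) :=
      tendsto_const_nhds.add (hid.mul hslopeF)
    rw [zero_mul, add_zero] at h2
    refine h2.congr' ?_
    filter_upwards [self_mem_nhdsWithin] with p hp
    rw [mul_div_cancel₀ _ (ne_of_gt hp)]
    ring
  have hcomp : Tendsto (fun p => htil (F p)) (nhdsWithin 0 (Set.Ioi 0)) (nhds 1) :=
    htil_tendsto.comp hF1
  have hfinal : Tendsto (fun p => htil (F p) * ((F p - 1) / p)) (nhdsWithin 0 (Set.Ioi 0))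
      (nhds (1 * (-(1/(n:ℝ)) * L))) := hcomp.mul hslopeF
  rw [one_mul] at hfinal
  refine hfinal.congr' ?_
  filter_upwards [self_mem_nhdsWithin] with p hp
  show htil (F p) * ((F p - 1) / p) = 1 / p * Real.log (F p)
  by_cases hFp : F p = 1
  · rw [hFp]; simp [htil]
  · simp only [htil, if_neg hFp]
    have h1 : F p - 1 ≠ 0 := sub_ne_zero.mpr hFp
    field_simp
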